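/- arXiv:1011.2169 — 3 statements merged into one kernel-verified Lean document; each statement's English description precedes it below -/
import Mathlib

section
/- For every integer p ≥ 1, the alternating sum ∑_{k=0}^{2p} (-1)^k · C(2p,k) · C(4p−k,2p) · C(2p+k,k) equals (−1)^p · (3p)!/(p!)^3. -/
open Finset

lemma split_lemma (j : ℕ) (h : ℕ → ℚ) :
    ∑ k ∈ range (j+2), (-1:ℚ)^k * ((j+1).choose k) * h k
      = ∑ k ∈ range (j+1), (-1:ℚ)^k * (j.choose k) * (h k - h (k+1)) := by
  have key : ∑ k ∈ range (j+1), (-1:ℚ)^(k+1) * (j.choose (k+1)) * h (k+1)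
      = (∑ k ∈ range (j+1), (-1:ℚ)^k * (j.choose k) * h k) - h 0 := by
    have t := Finset.sum_range_succ' (fun k => (-1:ℚ)^k * (j.choose k) * h k) (j+1)
    have t2 := Finset.sum_range_succ (fun k => (-1:ℚ)^k * (j.choose k) * h k) (j+1)
    simp only [Nat.choose_eq_zero_of_lt (Nat.lt_succ_self j), Nat.cast_zero, mul_zero,
      zero_mul, add_zero, pow_zero, Nat.choose_zero_right, Nat.cast_one, mul_one, one_mul] at t t2
    rw [t2] at t
    linarith [t]
  rw [Finset.sum_range_succ' (fun k => (-1:ℚ)^k * ((j+1).choose k) * h k) (j+1)]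
  have e1 : ∀ k ∈ range (j+1), (-1:ℚ)^(k+1) * ((j+1).choose (k+1)) * h (k+1)
      = (-((-1:ℚ)^k * (j.choose k) * h (k+1))) + (-1:ℚ)^(k+1) * (j.choose (k+1)) * h (k+1) := by
    intro k _
    rw [Nat.choose_succ_succ']
    push_cast
    ring
  rw [Finset.sum_congr rfl e1, Finset.sum_add_distrib, key]
  have e3 : ∑ k ∈ range (j+1), (-1:ℚ)^k * (j.choose k) * (h k - h (k+1))
      = ∑ k ∈ range (j+1), ((-1:ℚ)^k * (j.choose k) * h k + -((-1:ℚ)^k * (j.choose k) * h (k+1))) := by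
    refine Finset.sum_congr rfl ?_
    intros; ring
  rw [e3, Finset.sum_add_distrib]
  simp only [pow_zero, Nat.choose_zero_right, Nat.cast_one, mul_one, one_mul]
  rw [Finset.sum_neg_distrib]
  ring

lemma gsum (m : ℕ) : ∀ (j r : ℕ), j ≤ r →
    ∑ k ∈ range (j+1), (-1:ℚ)^k * (j.choose k) * ((m+k).choose r) = (-1)^j * (m.choose (r-j)) := by
  intro j
  induction j with
  | zero => intro r _; simp
  | succ j ih =>
    rintro r hr
    obtain ⟨s, rfl⟩ : ∃ s, r = s+1 := ⟨r-1, by omega⟩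
    rw [show j+1+1 = j+2 from rfl, split_lemma j (fun k => ((m+k).choose (s+1) : ℚ))]
    have step : ∀ k ∈ range (j+1), (-1:ℚ)^k * (j.choose k) *
        (((m+k).choose (s+1) : ℚ) - ((m+(k+1)).choose (s+1) : ℚ))
        = -((-1:ℚ)^k * (j.choose k) * ((m+k).choose s)) := by
      intro k _
      have : (m+(k+1)).choose (s+1) = (m+k).choose s + (m+k).choose (s+1) := by
        rw [show m+(k+1) = (m+k)+1 from rfl, Nat.choose_succ_succ']
      rw [this]
      push_cast
      ring
    rw [Finset.sum_congr rfl step, Finset.sum_neg_distrib, ih s (by omega)]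
    rw [show s-j = s+1-(j+1) by omega]
    push_cast
    ring

lemma reduce (p : ℕ) :
    ∑ k ∈ range (2*p+1), ((-1:ℚ)^k * ((2*p).choose k) * ((4*p-k).choose (2*p)) * ((2*p+k).choose k))
      = ∑ j ∈ range (2*p+1), (-1:ℚ)^j * ((2*p).choose j)^3 := by
  have hterm : ∀ k ∈ range (2*p+1),
      (-1:ℚ)^k * ((2*p).choose k) * ((4*p-k).choose (2*p)) * ((2*p+k).choose k)
      = ∑ j ∈ range (2*p+1),
          (-1:ℚ)^k * ((2*p).choose j)^2 * (j.choose k) * ((2*p+k).choose (2*p)) := by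
    intro k hk
    have hk' : k ≤ 2*p := by simpa [Nat.lt_succ_iff] using hk
    have hv : ((4*p-k).choose (2*p) : ℕ)
        = ∑ j ∈ range (2*p+1), (2*p).choose j * (2*p-k).choose (2*p-j) := by
      rw [show 4*p-k = 2*p + (2*p-k) by omega, Nat.add_choose_eq,
        Finset.Nat.sum_antidiagonal_eq_sum_range_succ_mk]
    rw [hv]
    push_cast
    rw [Finset.mul_sum, Finset.sum_mul]
    refine Finset.sum_congr rfl ?_
    intro j hj
    have hj' : j ≤ 2*p := by simpa [Nat.lt_succ_iff] using hj
    have h2 : (2*p+k).choose (2*p) = (2*p+k).choose k := Nat.choose_symm_add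
    have h1 : (2*p).choose k * ((2*p-k).choose (2*p-j)) = (2*p).choose j * j.choose k := by
      by_cases hkj : k ≤ j
      · have hm := Nat.choose_mul (n := 2*p) hkj
        have e : 2*p-j = (2*p-k)-(j-k) := by omega
        rw [e, Nat.choose_symm (by omega)]
        omega
      · have h0 : (2*p-k).choose (2*p-j) = 0 := Nat.choose_eq_zero_of_lt (by omega)
        have h0' : j.choose k = 0 := Nat.choose_eq_zero_of_lt (by omega)
        simp [h0, h0']
    have h1' : ((2*p).choose k : ℚ) * ((2*p-k).choose (2*p-j)) = ((2*p).choose j) * (j.choose k) := by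
      exact_mod_cast congrArg (Nat.cast : ℕ → ℚ) h1
    rw [h2]
    linear_combination ((-1:ℚ)^k * (((2*p).choose j : ℕ) : ℚ) * (((2*p+k).choose k : ℕ) : ℚ)) * h1'
  rw [Finset.sum_congr rfl hterm, Finset.sum_comm]
  refine Finset.sum_congr rfl ?_
  intro j hj
  have hj' : j ≤ 2*p := by simpa [Nat.lt_succ_iff] using hj
  have e1 : ∀ k ∈ range (2*p+1),
      (-1:ℚ)^k * ((2*p).choose j)^2 * (j.choose k) * ((2*p+k).choose (2*p))
      = ((2*p).choose j)^2 * ((-1:ℚ)^k * (j.choose k) * ((2*p+k).choose (2*p))) := by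
    intros; ring
  rw [Finset.sum_congr rfl e1, ← Finset.mul_sum]
  have e2 : ∑ k ∈ range (2*p+1), (-1:ℚ)^k * (j.choose k) * ((2*p+k).choose (2*p))
      = ∑ k ∈ range (j+1), (-1:ℚ)^k * (j.choose k) * ((2*p+k).choose (2*p)) := by
    refine (Finset.sum_subset (Finset.range_subset_range.2 (by omega)) ?_).symm
    intro k _ hk2
    have : j < k := by simpa [Nat.lt_succ_iff] using hk2
    simp [Nat.choose_eq_zero_of_lt this]
  rw [e2, gsum (2*p) j (2*p) hj', Nat.choose_symm hj']
  ring


def Qpoly (n j : ℚ) : ℚ :=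
  -116 + 207*j - 147*j^2 + 48*j^3 - 6*j^4
  + n*(-784 + 1113*j - 594*j^2 + 132*j^3 - 9*j^4)
  + n^2*(-2084 + 2214*j - 792*j^2 + 90*j^3)
  + n^3*(-2728 + 1932*j - 348*j^2)
  + n^4*(-1760 + 624*j)
  + n^5*(-448)

def Tf (n j : ℕ) : ℚ := (-1:ℚ)^(j+1) * Qpoly n ((j:ℚ)+1) * (((2*n+1).choose j : ℕ) : ℚ)^3

def Df (n j : ℕ) : ℚ := 2*(2*(n:ℚ)+1)^3 *
  (((n:ℚ)+1)^2 * (-1:ℚ)^j * (((2*n+2).choose j : ℕ) : ℚ)^3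
   + 3*(3*(n:ℚ)+1)*(3*(n:ℚ)+2) * (-1:ℚ)^j * (((2*n).choose j : ℕ) : ℚ)^3)

lemma fact_cast_succ (a : ℕ) : ((a+1).factorial : ℚ) = ((a:ℚ)+1) * (a.factorial : ℚ) := by
  rw [Nat.factorial_succ]; push_cast; ring

lemma key (n i m : ℕ) (h : 2*n = i+m+1) : Df n (i+1) = Tf n (i+1) - Tf n i := by
  have e0 : 2*n = i+m+1 := h
  have e1 : 2*n+1 = i+m+2 := by omega
  have e2 : 2*n+2 = i+m+3 := by omega
  rw [Df, Tf, Tf, e0, show i+m+1+2 = i+m+3 by omega, show i+m+1+1 = i+m+2 by omega]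
  have c1 : (((i+m+1).choose (i+1) : ℕ) : ℚ)
      = ((i+m+1).factorial : ℚ) / (((i+1).factorial : ℚ) * (m.factorial : ℚ)) := by
    rw [Nat.cast_choose ℚ (by omega), show i+m+1-(i+1) = m by omega]
  have c2 : (((i+m+2).choose (i+1) : ℕ) : ℚ)
      = ((i+m+2).factorial : ℚ) / (((i+1).factorial : ℚ) * ((m+1).factorial : ℚ)) := by
    rw [Nat.cast_choose ℚ (by omega), show i+m+2-(i+1) = m+1 by omega]
  have c3 : (((i+m+2).choose i : ℕ) : ℚ)
      = ((i+m+2).factorial : ℚ) / ((i.factorial : ℚ) * ((m+2).factorial : ℚ)) := by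
    rw [Nat.cast_choose ℚ (by omega), show i+m+2-i = m+2 by omega]
  have c4 : (((i+m+3).choose (i+1) : ℕ) : ℚ)
      = ((i+m+3).factorial : ℚ) / (((i+1).factorial : ℚ) * ((m+2).factorial : ℚ)) := by
    rw [Nat.cast_choose ℚ (by omega), show i+m+3-(i+1) = m+2 by omega]
  rw [c1, c2, c3, c4]
  rw [show i+m+3 = (i+m+2)+1 from rfl, fact_cast_succ (i+m+2),
      show i+m+2 = (i+m+1)+1 from rfl, fact_cast_succ (i+m+1),
      fact_cast_succ i,
      show m+2 = (m+1)+1 from rfl, fact_cast_succ (m+1), fact_cast_succ m]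
  have hn : (n:ℚ) = ((i:ℚ)+(m:ℚ)+1)/2 := by
    have := congrArg (Nat.cast : ℕ → ℚ) h
    push_cast at this
    linarith
  rw [hn]
  have hI : (i.factorial : ℚ) ≠ 0 := by positivity
  have hM : (m.factorial : ℚ) ≠ 0 := by positivity
  have hA : (((i+m+1).factorial : ℕ) : ℚ) ≠ 0 := by positivity
  have hi1 : ((i:ℚ)+1) ≠ 0 := by positivity
  have hm1 : ((m:ℚ)+1) ≠ 0 := by positivity
  have hm2 : ((m:ℚ)+2) ≠ 0 := by positivity
  rw [Qpoly, Qpoly]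
  push_cast
  field_simp
  ring

lemma keyA (n : ℕ) : Df n 0 = Tf n 0 := by
  rw [Df, Tf, Qpoly]
  simp
  push_cast
  ring

lemma keyB (n : ℕ) : Df n (2*n+1) = Tf n (2*n+1) - Tf n (2*n) := by
  rw [Df, Tf, Tf, Qpoly, Qpoly]
  have h1 : (2*n+2).choose (2*n+1) = 2*n+2 := by
    rw [show 2*n+2 = (2*n+1)+1 from rfl, Nat.choose_succ_self_right]
  have h2 : (2*n).choose (2*n+1) = 0 := Nat.choose_eq_zero_of_lt (by omega)
  have h3 : (2*n+1).choose (2*n+1) = 1 := Nat.choose_self _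
  have h4 : (2*n+1).choose (2*n) = 2*n+1 := by
    rw [show 2*n+1 = (2*n)+1 from rfl, Nat.choose_succ_self_right]
  rw [h1, h2, h3, h4]
  have hs : (-1:ℚ)^(2*n+1) = -1 := by
    rw [pow_succ, pow_mul]; norm_num
  have hs2 : (-1:ℚ)^(2*n+1+1) = 1 := by rw [pow_succ, hs]; norm_num
  rw [hs, hs2]
  push_cast
  ring

lemma keyC (n : ℕ) : Df n (2*n+2) = Tf n (2*n+2) - Tf n (2*n+1) := by
  rw [Df, Tf, Tf, Qpoly, Qpoly]
  have h1 : (2*n+2).choose (2*n+2) = 1 := Nat.choose_self _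
  have h2 : (2*n).choose (2*n+2) = 0 := Nat.choose_eq_zero_of_lt (by omega)
  have h3 : (2*n+1).choose (2*n+2) = 0 := Nat.choose_eq_zero_of_lt (by omega)
  have h4 : (2*n+1).choose (2*n+1) = 1 := Nat.choose_self _
  rw [h1, h2, h3, h4]
  have hs : (-1:ℚ)^(2*n+1) = -1 := by rw [pow_succ, pow_mul]; norm_num
  have hs2 : (-1:ℚ)^(2*n+2) = 1 := by rw [show 2*n+2 = (2*n+1)+1 from rfl, pow_succ, hs]; norm_num
  have hs3 : (-1:ℚ)^(2*n+3) = -1 := by rw [show 2*n+3 = (2*n+2)+1 from rfl, pow_succ, hs2]; norm_num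
  rw [show 2*n+1+1 = 2*n+2 from rfl, show 2*n+2+1 = 2*n+3 from rfl, hs2, hs3]
  push_cast
  ring

lemma sumD (n : ℕ) : ∀ M, ∑ j ∈ range (M+1), Df n j = Tf n M := by
  intro M
  induction M with
  | zero => simpa using keyA n
  | succ M ih =>
    rw [Finset.sum_range_succ, ih]
    have hstep : Df n (M+1) = Tf n (M+1) - Tf n M := by
      rcases lt_or_ge (M+1) (2*n+1) with hlt | hge
      · exact key n M (2*n-M-1) (by omega)
      · rcases eq_or_lt_of_le hge with heq | hgt
        · have hM : M = 2*n := by omega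
          subst hM
          exact keyB n
        · rcases eq_or_lt_of_le (show 2*n+2 ≤ M+1 by omega) with heq2 | hgt2
          · have hM : M = 2*n+1 := by omega
            subst hM
            rw [show 2*n+1+1 = 2*n+2 by omega]
            exact keyC n
          · have d0 : Df n (M+1) = 0 := by
              rw [Df, Nat.choose_eq_zero_of_lt (by omega : 2*n+2 < M+1),
                Nat.choose_eq_zero_of_lt (by omega : 2*n < M+1)]
              push_cast; ring
            have t0 : Tf n (M+1) = 0 := by
              rw [Tf, Nat.choose_eq_zero_of_lt (by omega : 2*n+1 < M+1)]
              push_cast; ring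
            have t1 : Tf n M = 0 := by
              rw [Tf, Nat.choose_eq_zero_of_lt (by omega : 2*n+1 < M)]
              push_cast; ring
            rw [d0, t0, t1]; ring
    rw [hstep]; ring

lemma dixon (p : ℕ) : ∑ j ∈ range (2*p+1), (-1:ℚ)^j * ((2*p).choose j)^3
    = (-1:ℚ)^p * ((3*p).factorial : ℚ) / ((p.factorial : ℚ))^3 := by
  induction p with
  | zero => simp
  | succ n ih =>
    have h0 : ∑ j ∈ range (2*n+3), Df n j = Tf n (2*n+2) := sumD n (2*n+2)
    have hT : Tf n (2*n+2) = 0 := by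
      rw [Tf, Nat.choose_eq_zero_of_lt (by omega)]
      push_cast; ring
    have expand : 2*(2*(n:ℚ)+1)^3 * (((n:ℚ)+1)^2 *
          (∑ j ∈ range (2*n+3), (-1:ℚ)^j * (((2*n+2).choose j : ℕ) : ℚ)^3)
        + 3*(3*(n:ℚ)+1)*(3*(n:ℚ)+2) *
          (∑ j ∈ range (2*n+3), (-1:ℚ)^j * (((2*n).choose j : ℕ) : ℚ)^3))
        = ∑ j ∈ range (2*n+3), Df n j := by
      rw [Finset.mul_sum, Finset.mul_sum, ← Finset.sum_add_distrib, Finset.mul_sum]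
      refine Finset.sum_congr rfl ?_
      intros j _
      rw [Df]; ring
    have hS0 : ∑ j ∈ range (2*n+3), (-1:ℚ)^j * (((2*n).choose j : ℕ) : ℚ)^3
        = ∑ j ∈ range (2*n+1), (-1:ℚ)^j * (((2*n).choose j : ℕ) : ℚ)^3 := by
      rw [show 2*n+3 = (2*n+2)+1 from rfl, Finset.sum_range_succ,
        show 2*n+2 = (2*n+1)+1 from rfl, Finset.sum_range_succ,
        Nat.choose_eq_zero_of_lt (by omega : 2*n < 2*n+1),
        Nat.choose_eq_zero_of_lt (by omega : 2*n < (2*n+1)+1)]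
      push_cast; ring
    rw [hS0, ih, h0, hT] at expand
    have hfac : (((3*(n+1)).factorial : ℕ) : ℚ)
        = (3*(n:ℚ)+3)*(3*(n:ℚ)+2)*(3*(n:ℚ)+1) * (((3*n).factorial : ℕ) : ℚ) := by
      rw [show 3*(n+1) = (3*n+2)+1 by ring, fact_cast_succ,
        show 3*n+2 = (3*n+1)+1 from rfl, fact_cast_succ,
        show 3*n+1 = (3*n)+1 from rfl, fact_cast_succ]
      push_cast; ring
    have hfac2 : (((n+1).factorial : ℕ) : ℚ) = ((n:ℚ)+1) * ((n.factorial : ℕ) : ℚ) :=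
      fact_cast_succ n
    have hne : ((n:ℚ)+1)^2 ≠ 0 := by positivity
    have hne2 : (2*(2*(n:ℚ)+1)^3) ≠ 0 := by positivity
    have hF : ((n.factorial : ℕ):ℚ) ≠ 0 := by positivity
    have h5 : ((n:ℚ)+1)^2 * (∑ j ∈ range (2*n+3), (-1:ℚ)^j * (((2*n+2).choose j : ℕ) : ℚ)^3)
        = -(3*(3*(n:ℚ)+1)*(3*(n:ℚ)+2) * ((-1:ℚ)^n * ((3*n).factorial : ℚ) / ((n.factorial : ℚ))^3)) := by
      rcases mul_eq_zero.1 expand with hc | hc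
      · exact absurd hc hne2
      · linarith
    have htarget : ((n:ℚ)+1)^2 * ((-1:ℚ)^(n+1) * (((3*(n+1)).factorial : ℕ) : ℚ) / (((n+1).factorial : ℕ) : ℚ)^3)
        = -(3*(3*(n:ℚ)+1)*(3*(n:ℚ)+2) * ((-1:ℚ)^n * ((3*n).factorial : ℚ) / ((n.factorial : ℚ))^3)) := by
      rw [hfac, hfac2, pow_succ]
      field_simp
      ring
    have : ((n:ℚ)+1)^2 * (∑ j ∈ range (2*n+3), (-1:ℚ)^j * (((2*n+2).choose j : ℕ) : ℚ)^3)
        = ((n:ℚ)+1)^2 * ((-1:ℚ)^(n+1) * (((3*(n+1)).factorial : ℕ) : ℚ) / (((n+1).factorial : ℕ) : ℚ)^3) := by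
      rw [h5, htarget]
    have hfin := mul_left_cancel₀ hne this
    rw [show 2*(n+1)+1 = 2*n+3 by ring, show 2*(n+1) = 2*n+2 by ring]
    rw [hfin]

theorem stmt0 (p : ℕ) (hp : 1 ≤ p) :
    ∑ k ∈ Finset.range (2 * p + 1),
        ((-1 : ℚ) ^ k * ((2 * p).choose k) * ((4 * p - k).choose (2 * p)) *
          ((2 * p + k).choose k))
      = (-1 : ℚ) ^ p * ((3 * p).factorial : ℚ) / ((p.factorial : ℚ)) ^ 3 := by
  exact (reduce p).trans (dixon p)
end

section
/- The polynomial f_m := ∑_{k=0}^{m−1} (−1)^k x_k x_{2m−k} + (1/2)(−1)^m x_m^2 lies in the kernel of the Weitzenböck derivation D_n, for every m with 1 ≤ m ≤ ⌊n/2⌋. -/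
open MvPolynomial Finset

noncomputable def Dw (K : Type) [CommRing K] (n : ℕ) :
    Derivation K (MvPolynomial (Fin (n + 1)) K) (MvPolynomial (Fin (n + 1)) K) :=
  MvPolynomial.mkDerivation K fun i =>
    if i.1 = 0 then 0 else
      MvPolynomial.X ⟨i.1 - 1, Nat.lt_of_le_of_lt (Nat.sub_le _ _) i.isLt⟩

open Fin.NatCast in
noncomputable def fpoly (K : Type) [Field K] (n m : ℕ) : MvPolynomial (Fin (n + 1)) K :=
  ∑ k ∈ Finset.range m,
      ((-1 : K) ^ k) • (X ((k : ℕ) : Fin (n + 1)) * X ((2 * m - k : ℕ) : Fin (n + 1)))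
    + (((-1 : K) ^ m) / 2) • (X ((m : ℕ) : Fin (n + 1))) ^ 2

open Fin.NatCast in
lemma DwX (K : Type) [Field K] (n a : ℕ) (ha : a ≤ n) :
    Dw K n (X ((a : ℕ) : Fin (n + 1))) =
      if a = 0 then 0 else X (((a - 1 : ℕ)) : Fin (n + 1)) := by
  have hlt : a < n + 1 := Nat.lt_succ_of_le ha
  have hv : ((a : Fin (n+1)) : ℕ) = a := Fin.val_cast_of_lt hlt
  rw [Dw, mkDerivation_X]
  by_cases h : a = 0
  · simp [hv, h]
  · rw [if_neg (by rw [hv]; exact h), if_neg h]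
    congr 1
    apply Fin.ext
    simp [hv, Fin.val_cast_of_lt (show a - 1 < n + 1 by omega)]

open Fin.NatCast in
theorem stmt1 (K : Type) [Field K] [CharZero K] (n m : ℕ)
    (h1 : 1 ≤ m) (h2 : m ≤ n / 2) :
    Dw K n (fpoly K n m) = 0 := by
  have h2m : 2 * m ≤ n := by omega
  rw [fpoly, map_add, map_sum, Derivation.map_smul, Derivation.leibniz_pow]
  rw [DwX K n m (by omega), if_neg (by omega)]
  have hsum : ∀ k ∈ Finset.range m,
      Dw K n (((-1 : K) ^ k) • (X ((k : ℕ) : Fin (n + 1)) * X ((2 * m - k : ℕ) : Fin (n + 1))))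
      = ((-1 : K) ^ k) • ((if k = 0 then 0 else X (((k - 1 : ℕ)) : Fin (n + 1))) * X ((2 * m - k : ℕ) : Fin (n + 1))
          + X ((k : ℕ) : Fin (n + 1)) * X (((2 * m - k - 1 : ℕ)) : Fin (n + 1))) := by
    intro k hk
    rw [Finset.mem_range] at hk
    rw [Derivation.map_smul, Derivation.leibniz, DwX K n k (by omega),
      DwX K n (2*m-k) (by omega), if_neg (by omega)]
    simp only [smul_eq_mul]
    ring
  rw [Finset.sum_congr rfl hsum]
  obtain ⟨m', rfl⟩ : ∃ m', m = m' + 1 := ⟨m - 1, by omega⟩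
  set M := m' + 1 with hM
  simp only [smul_add]
  rw [Finset.sum_add_distrib, Finset.sum_range_succ' _ m', Finset.sum_range_succ _ m']
  have key : ∀ j ∈ Finset.range m',
      ((-1 : K) ^ (j+1)) • ((if j+1 = 0 then (0 : MvPolynomial (Fin (n+1)) K) else X (((j+1 - 1 : ℕ)) : Fin (n + 1))) *
          X ((2 * M - (j+1) : ℕ) : Fin (n + 1)))
      = - (((-1 : K) ^ j) • (X ((j : ℕ) : Fin (n + 1)) * X (((2 * M - j - 1 : ℕ)) : Fin (n + 1)))) := by
    intro j hj
    rw [if_neg (Nat.succ_ne_zero j), Nat.add_sub_cancel,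
      show (2 * M - (j+1) : ℕ) = 2 * M - j - 1 by omega, pow_succ, mul_neg_one, neg_smul]
  rw [Finset.sum_congr rfl key, Finset.sum_neg_distrib]
  rw [if_pos rfl, zero_mul, smul_zero]
  rw [show (2 * M - m' - 1 : ℕ) = M by omega, show (M - 1 : ℕ) = m' by omega, pow_one]
  rw [smul_eq_mul, ← Nat.cast_smul_eq_nsmul K, smul_smul, Nat.cast_ofNat,
    div_mul_cancel₀ _ (two_ne_zero), pow_succ, mul_neg_one, neg_smul,
    mul_comm (X ((M : ℕ) : Fin (n+1)))]
  ring
end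

section
/- The radical of the Hilbert ideal I_n := A_{n,+} R_n (the ideal of R_n generated by invariants of positive degree) equals the ideal (x_0, x_1, ..., x_{⌊n/2⌋}) of R_n. -/
open MvPolynomial Finset
open Fin.NatCast

namespace Hilb
set_option linter.unusedSectionVars false
set_option maxHeartbeats 1000000

def wtZ (n : ℕ) (τ : Fin (n+1) →₀ ℕ) : ℤ :=
  ∑ i : Fin (n+1), (τ i : ℤ) * ((n : ℤ) - 2 * (i : ℕ))

def degZ (n : ℕ) (τ : Fin (n+1) →₀ ℕ) : ℕ := ∑ i : Fin (n+1), τ i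

lemma wtZ_add (n : ℕ) (a b : Fin (n+1) →₀ ℕ) : wtZ n (a + b) = wtZ n a + wtZ n b := by
  simp only [wtZ, Finsupp.add_apply, ← Finset.sum_add_distrib]
  refine Finset.sum_congr rfl fun i _ => by push_cast; ring

lemma degZ_add (n : ℕ) (a b : Fin (n+1) →₀ ℕ) : degZ n (a + b) = degZ n a + degZ n b := by
  simp only [degZ, Finsupp.add_apply, ← Finset.sum_add_distrib]

lemma wtZ_single (n : ℕ) (j : Fin (n+1)) : wtZ n (Finsupp.single j 1) = (n : ℤ) - 2 * (j : ℕ) := by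
  simp only [wtZ, Finsupp.single_apply]
  rw [Finset.sum_eq_single j] <;> simp +contextual [eq_comm]

lemma degZ_single (n : ℕ) (j : Fin (n+1)) : degZ n (Finsupp.single j 1) = 1 := by
  simp only [degZ, Finsupp.single_apply]
  rw [Finset.sum_eq_single j] <;> simp +contextual [eq_comm]

lemma sub_single_add (n : ℕ) (s : Fin (n+1) →₀ ℕ) (i : Fin (n+1)) (hi : s i ≠ 0) :
    s - Finsupp.single i 1 + Finsupp.single i 1 = s := by
  apply tsub_add_cancel_of_le
  rw [Finsupp.single_le_iff]; omega

lemma wtZ_move (n : ℕ) (s : Fin (n+1) →₀ ℕ) (i j : Fin (n+1)) (hi : s i ≠ 0) :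
    wtZ n (s - Finsupp.single i 1 + Finsupp.single j 1)
      = wtZ n s - ((n : ℤ) - 2 * (i : ℕ)) + ((n : ℤ) - 2 * (j : ℕ)) := by
  have h1 := wtZ_add n (s - Finsupp.single i 1) (Finsupp.single i 1)
  rw [sub_single_add n s i hi] at h1
  have h2 := wtZ_single n i
  rw [wtZ_add, wtZ_single]
  linarith

lemma degZ_move (n : ℕ) (s : Fin (n+1) →₀ ℕ) (i j : Fin (n+1)) (hi : s i ≠ 0) :
    degZ n (s - Finsupp.single i 1 + Finsupp.single j 1) = degZ n s := by
  have h1 := degZ_add n (s - Finsupp.single i 1) (Finsupp.single i 1)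
  rw [sub_single_add n s i hi] at h1
  have h2 := degZ_single n i
  rw [degZ_add, degZ_single]
  omega

lemma wtZ_lower (n : ℕ) (τ : Fin (n+1) →₀ ℕ) : -((n : ℤ) * degZ n τ) ≤ wtZ n τ := by
  rw [wtZ, degZ]
  push_cast
  rw [Finset.mul_sum, ← Finset.sum_neg_distrib]
  refine Finset.sum_le_sum fun i _ => ?_
  have h1 : (i : ℕ) ≤ n := by omega
  have h2 : (0:ℤ) ≤ (τ i : ℤ) := by positivity
  nlinarith [Int.ofNat_le.2 h1]

variable (K : Type) [Field K] [CharZero K]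

lemma mkD_support {n : ℕ} (v : Fin (n+1) → MvPolynomial (Fin (n+1)) K)
    (s : Fin (n+1) →₀ ℕ) (r : K) (τ : Fin (n+1) →₀ ℕ)
    (hτ : τ ∈ ((mkDerivation K v) (monomial s r)).support) :
    ∃ i, s i ≠ 0 ∧
      τ ∈ ((monomial (s - Finsupp.single i 1) ((s i : K))) • v i).support := by
  classical
  rw [mkDerivation_monomial] at hτ
  have h1 := MvPolynomial.support_smul hτ
  rw [Finsupp.sum] at h1
  have h2 := MvPolynomial.support_sum h1
  rcases Finset.mem_biUnion.1 h2 with ⟨i, hi, hτi⟩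
  exact ⟨i, Finsupp.mem_support_iff.1 hi, hτi⟩


noncomputable def Ew (n : ℕ) : Derivation K (MvPolynomial (Fin (n+1)) K) (MvPolynomial (Fin (n+1)) K) :=
  MvPolynomial.mkDerivation K fun i =>
    if h : (i : ℕ) < n then
      ((((i : ℕ) + 1) * (n - (i : ℕ)) : ℕ) : K) • X (⟨(i : ℕ) + 1, by omega⟩ : Fin (n+1))
    else 0

noncomputable def Hw (n : ℕ) : Derivation K (MvPolynomial (Fin (n+1)) K) (MvPolynomial (Fin (n+1)) K) :=
  MvPolynomial.mkDerivation K fun i => ((((n : ℤ) - 2 * (i : ℕ)) : ℤ) : K) • X i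

lemma smul_X_support {n : ℕ} (m : Fin (n+1) →₀ ℕ) (c : K) (j : Fin (n+1))
    (τ : Fin (n+1) →₀ ℕ) (hτ : τ ∈ ((monomial m c) • (X j : MvPolynomial (Fin (n+1)) K)).support) :
    τ = m + Finsupp.single j 1 := by
  classical
  rw [smul_eq_mul, X, monomial_mul, mul_one] at hτ
  have := MvPolynomial.support_monomial_subset hτ
  simpa using this

lemma Dw_support_mono {n : ℕ} (s : Fin (n+1) →₀ ℕ) (r : K) (τ : Fin (n+1) →₀ ℕ)
    (hτ : τ ∈ (Dw K n (monomial s r)).support) :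
    wtZ n τ = wtZ n s + 2 ∧ degZ n τ = degZ n s := by
  rcases mkD_support K _ s r τ hτ with ⟨i, hi, hmem⟩
  by_cases h0 : (i : ℕ) = 0
  · rw [if_pos h0] at hmem
    simp at hmem
  · rw [if_neg h0] at hmem
    set j : Fin (n+1) := ⟨(i : ℕ) - 1, Nat.lt_of_le_of_lt (Nat.sub_le _ _) i.isLt⟩ with hj
    have hτ' := smul_X_support K _ _ _ _ hmem
    subst hτ'
    have h1 := wtZ_move n s i j hi
    have h2 := degZ_move n s i j hi
    refine ⟨?_, h2⟩
    rw [h1]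
    have hji : ((j : ℕ) : ℤ) = ((i : ℕ) : ℤ) - 1 := by
      simp only [hj]
      push_cast [Nat.cast_sub (by omega : 1 ≤ (i : ℕ))]
      ring
    rw [hji]; ring

lemma Ew_support_mono {n : ℕ} (s : Fin (n+1) →₀ ℕ) (r : K) (τ : Fin (n+1) →₀ ℕ)
    (hτ : τ ∈ (Ew K n (monomial s r)).support) :
    wtZ n τ = wtZ n s - 2 ∧ degZ n τ = degZ n s := by
  rcases mkD_support K _ s r τ hτ with ⟨i, hi, hmem⟩
  by_cases h0 : (i : ℕ) < n
  · rw [dif_pos h0] at hmem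
    set j : Fin (n+1) := ⟨(i : ℕ) + 1, by omega⟩ with hj
    rw [smul_comm] at hmem
    have hmem2 := MvPolynomial.support_smul hmem
    have hτ' := smul_X_support K _ _ _ _ hmem2
    subst hτ'
    have h1 := wtZ_move n s i j hi
    have h2 := degZ_move n s i j hi
    refine ⟨?_, h2⟩
    rw [h1]
    have hji : ((j : ℕ) : ℤ) = ((i : ℕ) : ℤ) + 1 := by simp [hj]
    rw [hji]; ring
  · rw [dif_neg h0] at hmem
    simp at hmem

lemma Dw_support_gen {n : ℕ} (f : MvPolynomial (Fin (n+1)) K) (τ : Fin (n+1) →₀ ℕ)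
    (hτ : τ ∈ (Dw K n f).support) :
    ∃ s ∈ f.support, wtZ n τ = wtZ n s + 2 ∧ degZ n τ = degZ n s := by
  classical
  conv at hτ => rw [MvPolynomial.as_sum f]
  rw [map_sum] at hτ
  have h2 := MvPolynomial.support_sum hτ
  rcases Finset.mem_biUnion.1 h2 with ⟨s, hs, hτs⟩
  exact ⟨s, hs, Dw_support_mono K s _ τ hτs⟩

lemma Ew_support_gen {n : ℕ} (f : MvPolynomial (Fin (n+1)) K) (τ : Fin (n+1) →₀ ℕ)
    (hτ : τ ∈ (Ew K n f).support) :
    ∃ s ∈ f.support, wtZ n τ = wtZ n s - 2 ∧ degZ n τ = degZ n s := by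
  classical
  conv at hτ => rw [MvPolynomial.as_sum f]
  rw [map_sum] at hτ
  have h2 := MvPolynomial.support_sum hτ
  rcases Finset.mem_biUnion.1 h2 with ⟨s, hs, hτs⟩
  exact ⟨s, hs, Ew_support_mono K s _ τ hτs⟩


lemma Hw_monomial {n : ℕ} (s : Fin (n+1) →₀ ℕ) (r : K) :
    Hw K n (monomial s r) = (((wtZ n s : ℤ)) : K) • monomial s r := by
  classical
  rw [Hw, mkDerivation_monomial, Finsupp.sum]
  have hterm : ∀ i ∈ s.support,
      (monomial (s - Finsupp.single i 1) ((s i : K))) •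
        (((((n : ℤ) - 2 * (i : ℕ)) : ℤ) : K) • (X i : MvPolynomial (Fin (n+1)) K))
      = monomial s (((((n : ℤ) - 2 * (i : ℕ)) : ℤ) : K) * (s i : K)) := by
    intro i hi
    rw [smul_comm, smul_eq_mul, X, monomial_mul, mul_one,
      sub_single_add n s i (Finsupp.mem_support_iff.1 hi), smul_monomial, smul_eq_mul]
  rw [Finset.sum_congr rfl hterm, ← map_sum (monomial s), smul_monomial, smul_monomial]
  congr 1
  rw [smul_eq_mul, smul_eq_mul, mul_comm]
  congr 1
  have hext : ∑ i ∈ s.support, ((((n : ℤ) - 2 * (i : ℕ) : ℤ)) : K) * (s i : K)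
      = ∑ i : Fin (n+1), ((((n : ℤ) - 2 * (i : ℕ) : ℤ)) : K) * (s i : K) := by
    apply Finset.sum_subset (Finset.subset_univ _)
    intro i _ hi
    rw [Finsupp.notMem_support_iff.1 hi]
    simp
  rw [hext, wtZ]
  push_cast
  exact Finset.sum_congr rfl fun i _ => by ring

lemma Hw_homog {n : ℕ} (f : MvPolynomial (Fin (n+1)) K) (w : ℤ)
    (hf : ∀ s ∈ f.support, wtZ n s = w) :
    Hw K n f = ((w : ℤ) : K) • f := by
  conv_lhs => rw [MvPolynomial.as_sum f]
  rw [map_sum]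
  have : ∀ s ∈ f.support, Hw K n (monomial s (coeff s f))
      = ((w : ℤ) : K) • monomial s (coeff s f) := by
    intro s hs
    rw [Hw_monomial, hf s hs]
  rw [Finset.sum_congr rfl this, ← Finset.smul_sum, ← MvPolynomial.as_sum f]

lemma DwX {n : ℕ} (i : Fin (n+1)) :
    Dw K n (X i) = if (i : ℕ) = 0 then 0
      else X (⟨(i : ℕ) - 1, Nat.lt_of_le_of_lt (Nat.sub_le _ _) i.isLt⟩ : Fin (n+1)) := by
  rw [Dw, mkDerivation_X]

lemma EwX {n : ℕ} (i : Fin (n+1)) :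
    Ew K n (X i) = if h : (i : ℕ) < n then
      ((((i : ℕ) + 1) * (n - (i : ℕ)) : ℕ) : K) • X (⟨(i : ℕ) + 1, by omega⟩ : Fin (n+1))
    else 0 := by
  rw [Ew, mkDerivation_X]

lemma bracket_DE (n : ℕ) : ⁅Dw K n, Ew K n⁆ = Hw K n := by
  apply MvPolynomial.derivation_ext
  intro i
  rw [Derivation.commutator_apply, Hw, mkDerivation_X, EwX, DwX]
  by_cases h1 : (i : ℕ) < n
  · rw [dif_pos h1, Derivation.map_smul, DwX]
    rw [if_neg (by simp : ¬((⟨(i:ℕ)+1, by omega⟩ : Fin (n+1)) : ℕ) = 0)]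
    have he : (⟨((⟨(i:ℕ)+1, by omega⟩ : Fin (n+1)) : ℕ) - 1,
        Nat.lt_of_le_of_lt (Nat.sub_le _ _) (⟨(i:ℕ)+1, by omega⟩ : Fin (n+1)).isLt⟩ : Fin (n+1)) = i := by
      apply Fin.ext; simp
    rw [he]
    by_cases h0 : (i : ℕ) = 0
    · rw [if_pos h0, map_zero, sub_zero]
      congr 1
      push_cast [h0, Nat.sub_zero]
      ring
    · rw [if_neg h0, EwX]
      have hv : ((⟨(i:ℕ)-1, Nat.lt_of_le_of_lt (Nat.sub_le _ _) i.isLt⟩ : Fin (n+1)) : ℕ) = (i:ℕ)-1 := rfl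
      rw [dif_pos (show ((⟨(i:ℕ)-1, Nat.lt_of_le_of_lt (Nat.sub_le _ _) i.isLt⟩ : Fin (n+1)) : ℕ) < n by rw [hv]; omega)]
      have he2 : (⟨((⟨(i:ℕ)-1, Nat.lt_of_le_of_lt (Nat.sub_le _ _) i.isLt⟩ : Fin (n+1)) : ℕ) + 1, by omega⟩ : Fin (n+1)) = i := by
        apply Fin.ext
        simp only [hv]
        omega
      rw [he2, ← sub_smul]
      congr 1
      rw [hv]
      push_cast [Nat.cast_sub (by omega : (i:ℕ) ≤ n), Nat.cast_sub (by omega : 1 ≤ (i:ℕ)),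
        Nat.cast_sub (by omega : (i:ℕ) - 1 ≤ n)]
      ring
  · rw [dif_neg h1, map_zero, zero_sub]
    by_cases h0 : (i : ℕ) = 0
    · rw [if_pos h0, map_zero, neg_zero]
      have hn : n = 0 := by omega
      have hz2 : ((n : ℤ) - 2 * ((i : ℕ)) : ℤ) = 0 := by omega
      rw [hz2]
      norm_num
    · rw [if_neg h0, EwX]
      have hv : ((⟨(i:ℕ)-1, Nat.lt_of_le_of_lt (Nat.sub_le _ _) i.isLt⟩ : Fin (n+1)) : ℕ) = (i:ℕ)-1 := rfl
      rw [dif_pos (show ((⟨(i:ℕ)-1, Nat.lt_of_le_of_lt (Nat.sub_le _ _) i.isLt⟩ : Fin (n+1)) : ℕ) < n by rw [hv]; omega)]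
      have hin : (i : ℕ) = n := by omega
      have he2 : (⟨((⟨(i:ℕ)-1, Nat.lt_of_le_of_lt (Nat.sub_le _ _) i.isLt⟩ : Fin (n+1)) : ℕ) + 1, by omega⟩ : Fin (n+1)) = i := by
        apply Fin.ext
        simp only [hv]
        omega
      rw [he2, ← neg_smul]
      congr 1
      rw [hv]
      push_cast [Nat.cast_sub (by omega : (i:ℕ) - 1 ≤ n), Nat.cast_sub (by omega : 1 ≤ (i:ℕ))]
      rw [hin]
      ring

lemma comm_apply {n : ℕ} (g : MvPolynomial (Fin (n+1)) K) :
    Dw K n (Ew K n g) = Ew K n (Dw K n g) + Hw K n g := by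
  have h := bracket_DE K n
  have h2 : ⁅Dw K n, Ew K n⁆ g = Hw K n g := by rw [h]
  rw [Derivation.commutator_apply] at h2
  linear_combination (norm := module) h2


/-- iterated application of Ew -/
noncomputable def Epow (n : ℕ) (k : ℕ) (f : MvPolynomial (Fin (n+1)) K) :
    MvPolynomial (Fin (n+1)) K :=
  (((Ew K n : MvPolynomial (Fin (n+1)) K →ₗ[K] MvPolynomial (Fin (n+1)) K)) ^ k) f

lemma Epow_zero' {n : ℕ} (f : MvPolynomial (Fin (n+1)) K) : Epow K n 0 f = f := rfl

lemma Epow_succ {n : ℕ} (k : ℕ) (f : MvPolynomial (Fin (n+1)) K) :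
    Epow K n (k+1) f = Ew K n (Epow K n k f) := by
  rw [Epow, Epow, pow_succ']
  rfl

lemma Epow_homog {n : ℕ} (f : MvPolynomial (Fin (n+1)) K) (w : ℤ) (d : ℕ)
    (hw : ∀ s ∈ f.support, wtZ n s = w) (hd : ∀ s ∈ f.support, degZ n s ≤ d) (k : ℕ) :
    (∀ τ ∈ (Epow K n k f).support, wtZ n τ = w - 2 * k) ∧
      (∀ τ ∈ (Epow K n k f).support, degZ n τ ≤ d) := by
  induction k with
  | zero =>
    rw [Epow_zero']
    constructor
    · intro τ hτ; rw [hw τ hτ]; ring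
    · exact hd
  | succ k ih =>
    constructor
    · intro τ hτ
      rw [Epow_succ] at hτ
      rcases Ew_support_gen K _ τ hτ with ⟨s, hs, h1, _⟩
      rw [h1, ih.1 s hs]
      push_cast
      ring
    · intro τ hτ
      rw [Epow_succ] at hτ
      rcases Ew_support_gen K _ τ hτ with ⟨s, hs, _, h2⟩
      rw [h2]
      exact ih.2 s hs

lemma Epow_eventually_zero {n : ℕ} (f : MvPolynomial (Fin (n+1)) K) (w : ℤ)
    (hw : ∀ s ∈ f.support, wtZ n s = w) :
    ∃ k, Epow K n k f = 0 := by
  classical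
  set d : ℕ := f.support.sup (degZ n) with hdd
  have hd : ∀ s ∈ f.support, degZ n s ≤ d := fun s hs => Finset.le_sup hs
  set k : ℕ := (w + (n : ℤ) * d).toNat + 1 with hk
  refine ⟨k, ?_⟩
  by_contra hne
  rcases (MvPolynomial.support_nonempty.2 hne) with ⟨τ, hτ⟩
  have h1 := (Epow_homog K f w d hw hd k).1 τ hτ
  have h2 := (Epow_homog K f w d hw hd k).2 τ hτ
  have h3 := wtZ_lower n τ
  have h4 : ((degZ n τ : ℕ) : ℤ) ≤ (d : ℤ) := by exact_mod_cast h2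
  have h5 : (0:ℤ) ≤ (n : ℤ) := by positivity
  have h6 : -((n : ℤ) * d) ≤ wtZ n τ := by nlinarith
  have h7 : ((k : ℕ) : ℤ) ≥ w + (n : ℤ) * d + 1 := by
    rw [hk]
    push_cast
    have := Int.self_le_toNat (w + (n : ℤ) * d)
    omega
  omega

lemma DEpow {n : ℕ} (f : MvPolynomial (Fin (n+1)) K) (w : ℤ)
    (hw : ∀ s ∈ f.support, wtZ n s = w) (h0 : Dw K n f = 0) (k : ℕ) :
    Dw K n (Epow K n (k+1) f) = (((((k : ℤ)+1) * (w - k)) : ℤ) : K) • Epow K n k f := by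
  induction k with
  | zero =>
    rw [Epow_succ, Epow_zero', comm_apply, h0, map_zero, zero_add,
      Hw_homog K f w hw]
    norm_num
  | succ k ih =>
    rw [Epow_succ, comm_apply, ih, Derivation.map_smul,
      Hw_homog K (Epow K n (k+1) f) (w - 2*(k+1))
        (Epow_homog K f w (f.support.sup (degZ n)) hw (fun s hs => Finset.le_sup hs) (k+1)).1,
      ← Epow_succ, ← add_smul]
    congr 1
    push_cast
    ring

lemma homog_nonneg {n : ℕ} (f : MvPolynomial (Fin (n+1)) K) (w : ℤ)
    (hw : ∀ s ∈ f.support, wtZ n s = w) (h0 : Dw K n f = 0) (hne : f ≠ 0) :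
    0 ≤ w := by
  classical
  have hex : ∃ k, Epow K n k f = 0 := Epow_eventually_zero K f w hw
  set k0 := Nat.find hex with hk0
  have hk0z : Epow K n k0 f = 0 := Nat.find_spec hex
  have hk0ne : k0 ≠ 0 := by
    intro h
    rw [h, Epow_zero'] at hk0z
    exact hne hk0z
  obtain ⟨j, hj⟩ : ∃ j, k0 = j + 1 := ⟨k0 - 1, by omega⟩
  have hjne : Epow K n j f ≠ 0 := Nat.find_min hex (by omega)
  have hD := DEpow K f w hw h0 j
  rw [← hj, hk0z, map_zero] at hD
  have hc : ((((j : ℤ)+1) * (w - j) : ℤ) : K) = 0 := by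
    rcases smul_eq_zero.1 hD.symm with h | h
    · exact h
    · exact absurd h hjne
  have hcz : (((j : ℤ)+1) * (w - j) : ℤ) = 0 := by exact_mod_cast hc
  rcases mul_eq_zero.1 hcz with h | h
  · omega
  · omega


lemma ker_wt_nonneg {n : ℕ} (f : MvPolynomial (Fin (n+1)) K) (h0 : Dw K n f = 0) :
    ∀ τ ∈ f.support, 0 ≤ wtZ n τ := by
  classical
  intro τ hτ
  set w := wtZ n τ with hwdef
  set g : MvPolynomial (Fin (n+1)) K :=
    ∑ s ∈ f.support.filter (fun s => wtZ n s = w), monomial s (coeff s f) with hg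
  have hcg : ∀ s, coeff s g = if wtZ n s = w then coeff s f else 0 := by
    intro s
    rw [hg, MvPolynomial.coeff_sum]
    simp only [coeff_monomial]
    rw [Finset.sum_ite_eq' (f.support.filter (fun s => wtZ n s = w)) s (fun s' => coeff s' f)]
    by_cases h1 : wtZ n s = w
    · by_cases h2 : s ∈ f.support
      · simp [Finset.mem_filter, h1, h2]
      · simp [Finset.mem_filter, h1, h2, MvPolynomial.notMem_support_iff.1 h2]
    · simp [Finset.mem_filter, h1]
  have hgh : ∀ s ∈ g.support, wtZ n s = w := by
    intro s hs
    have hne := MvPolynomial.mem_support_iff.1 hs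
    rw [hcg] at hne
    by_contra hcon
    rw [if_neg hcon] at hne
    exact hne rfl
  have hcτ : coeff τ g = coeff τ f := by rw [hcg, if_pos rfl]
  have hgne : g ≠ 0 := by
    intro h
    rw [h, coeff_zero] at hcτ
    exact MvPolynomial.mem_support_iff.1 hτ hcτ.symm
  set p : MvPolynomial (Fin (n+1)) K := f - g with hp
  have hch : ∀ s ∈ p.support, wtZ n s ≠ w := by
    intro s hs heq
    have hcs : coeff s p = coeff s f - coeff s g := by rw [hp, MvPolynomial.coeff_sub]
    rw [hcg, if_pos heq, sub_self] at hcs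
    exact MvPolynomial.mem_support_iff.1 hs hcs
  have hDg : Dw K n g = 0 := by
    apply MvPolynomial.ext
    intro τ'
    rw [coeff_zero]
    by_cases hw' : wtZ n τ' = w + 2
    · have hf' : f = g + p := by rw [hp]; ring
      have hsum : coeff τ' (Dw K n f) = coeff τ' (Dw K n g) + coeff τ' (Dw K n p) := by
        rw [hf', map_add, MvPolynomial.coeff_add]
      have hh0 : coeff τ' (Dw K n p) = 0 := by
        rw [← MvPolynomial.notMem_support_iff]
        intro hmem
        rcases Dw_support_gen K p τ' hmem with ⟨s, hs, h1, _⟩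
        apply hch s hs
        omega
      rw [h0, coeff_zero, hh0, add_zero] at hsum
      exact hsum.symm
    · rw [← MvPolynomial.notMem_support_iff]
      intro hmem
      rcases Dw_support_gen K g τ' hmem with ⟨s, hs, h1, _⟩
      rw [hgh s hs] at h1
      exact hw' h1
  exact homog_nonneg K g w hgh hDg hgne


variable (n : ℕ)

/-- the Hilbert ideal -/
noncomputable def HI : Ideal (MvPolynomial (Fin (n+1)) K) :=
  Ideal.span {f : MvPolynomial (Fin (n + 1)) K |
    Dw K n f = 0 ∧ MvPolynomial.constantCoeff f = 0}

/-- ideal generated by low variables -/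
noncomputable def JI : Ideal (MvPolynomial (Fin (n+1)) K) :=
  Ideal.span (X '' {j : Fin (n+1) | (j : ℕ) ≤ n / 2})

/-- substitution killing low variables -/
noncomputable def psi : MvPolynomial (Fin (n+1)) K →ₐ[K] MvPolynomial (Fin (n+1)) K :=
  aeval (fun j : Fin (n+1) => if (j : ℕ) ≤ n / 2 then 0 else X j)

lemma sub_psi_mem (g : MvPolynomial (Fin (n+1)) K) : g - psi K n g ∈ JI K n := by
  induction g using MvPolynomial.induction_on with
  | C a => simp [psi, JI]
  | add p q hp hq =>
    have : p + q - psi K n (p + q) = (p - psi K n p) + (q - psi K n q) := by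
      rw [map_add]; ring
    rw [this]
    exact Ideal.add_mem _ hp hq
  | mul_X p j hp =>
    have h1 : (X j : MvPolynomial (Fin (n+1)) K) - psi K n (X j) ∈ JI K n := by
      rw [psi, aeval_X]
      by_cases hj : (j : ℕ) ≤ n / 2
      · rw [if_pos hj, sub_zero]
        exact Ideal.subset_span ⟨j, hj, rfl⟩
      · rw [if_neg hj, sub_self]
        exact Ideal.zero_mem _
    have : p * X j - psi K n (p * X j)
        = p * ((X j : MvPolynomial (Fin (n+1)) K) - psi K n (X j))
          + psi K n (X j) * (p - psi K n p) := by
      rw [map_mul]; ring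
    rw [this]
    exact Ideal.add_mem _ (Ideal.mul_mem_left _ _ h1) (Ideal.mul_mem_left _ _ hp)

lemma JI_eq_ker : JI K n = RingHom.ker (psi K n).toRingHom := by
  apply le_antisymm
  · rw [JI, Ideal.span_le]
    rintro _ ⟨j, hj, rfl⟩
    simp only [Set.mem_setOf_eq] at hj
    simp only [SetLike.mem_coe, RingHom.mem_ker, AlgHom.toRingHom_eq_coe, RingHom.coe_coe]
    rw [psi, aeval_X, if_pos hj]
  · intro f hf
    have h := sub_psi_mem K n f
    rw [RingHom.mem_ker] at hf
    rwa [show psi K n f = 0 from hf, sub_zero] at h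

lemma JI_prime : (JI K n).IsPrime := by
  rw [JI_eq_ker]
  exact RingHom.ker_isPrime _

lemma HI_le_JI : HI K n ≤ JI K n := by
  rw [HI, Ideal.span_le]
  rintro f ⟨hDf, hcf⟩
  rw [SetLike.mem_coe, JI, mem_ideal_span_X_image]
  intro τ hτ
  by_contra hcon
  push_neg at hcon
  have hwt := ker_wt_nonneg K f hDf τ hτ
  by_cases hτ0 : τ = 0
  · subst hτ0
    rw [MvPolynomial.mem_support_iff] at hτ
    rw [MvPolynomial.constantCoeff_eq] at hcf
    exact hτ hcf
  · obtain ⟨j, hj⟩ : ∃ j, τ j ≠ 0 := by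
      by_contra hall
      push_neg at hall
      exact hτ0 (Finsupp.ext hall)
    have hjS : ¬ ((j : ℕ) ≤ n / 2) := fun h => hj (hcon j h)
    have hle : wtZ n τ ≤ ∑ i : Fin (n+1), (if i = j then (-1 : ℤ) else 0) := by
      rw [wtZ]
      apply Finset.sum_le_sum
      intro i _
      by_cases hij : i = j
      · subst hij
        rw [if_pos rfl]
        have h1 : (1:ℤ) ≤ (τ i : ℤ) := by exact_mod_cast Nat.one_le_iff_ne_zero.2 hj
        have h2 : (n : ℤ) - 2 * ((i : ℕ) : ℤ) ≤ -1 := by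
          have : n / 2 < (i : ℕ) := by omega
          omega
        nlinarith
      · rw [if_neg hij]
        by_cases hτi : τ i = 0
        · rw [hτi]; simp
        · have hiS : ¬ ((i : ℕ) ≤ n / 2) := fun h => hτi (hcon i h)
          have h1 : (0:ℤ) ≤ (τ i : ℤ) := by positivity
          have h2 : (n : ℤ) - 2 * ((i : ℕ) : ℤ) ≤ -1 := by
            have : n / 2 < (i : ℕ) := by omega
            omega
          nlinarith
    rw [Finset.sum_ite_eq' Finset.univ j (fun _ => (-1:ℤ))] at hle
    rw [if_pos (Finset.mem_univ j)] at hle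
    omega

lemma DwXc (j : ℕ) (h : j ≤ n) :
    Dw K n (X ((j : ℕ) : Fin (n+1))) = if j = 0 then 0
      else X (((j - 1 : ℕ)) : Fin (n+1)) := by
  have hval : (((j : ℕ) : Fin (n+1)) : ℕ) = j := Fin.val_cast_of_lt (by omega)
  rw [DwX]
  by_cases h0 : j = 0
  · rw [if_pos (by rw [hval]; exact h0), if_pos h0]
  · rw [if_neg (by rw [hval]; exact h0), if_neg h0]
    congr 1
    apply Fin.ext
    simp only [hval]
    rw [Fin.val_cast_of_lt (by omega : j - 1 < n + 1)]

lemma Xmem (i : ℕ) (hi : i ≤ n / 2) :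
    (X ((i : ℕ) : Fin (n+1)) : MvPolynomial (Fin (n+1)) K) ∈ (HI K n).radical := by
  induction i using Nat.strong_induction_on with
  | _ i ih =>
  have h2i : 2 * i ≤ n := by omega
  set s2i : MvPolynomial (Fin (n+1)) K :=
    ∑ j ∈ Finset.range (2*i+1),
      ((-1 : K)^j) • (X ((j : ℕ) : Fin (n+1)) * X (((2*i - j : ℕ)) : Fin (n+1))) with hs2i
  have hDs : Dw K n s2i = 0 := by
    rw [hs2i, map_sum]
    have hterm : ∀ j ∈ Finset.range (2*i+1),
        Dw K n ((-1:K)^j • (X ((j:ℕ) : Fin (n+1)) * X (((2*i - j:ℕ)) : Fin (n+1))))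
        = (-1:K)^j • (X (((2*i - j:ℕ)) : Fin (n+1)) * Dw K n (X ((j:ℕ) : Fin (n+1))))
          + (-1:K)^j • (X ((j:ℕ) : Fin (n+1)) * Dw K n (X (((2*i - j:ℕ)) : Fin (n+1)))) := by
      intro j hj
      rw [Derivation.map_smul, Derivation.leibniz, smul_eq_mul, smul_eq_mul, smul_add]
      ring_nf
    rw [Finset.sum_congr rfl hterm, Finset.sum_add_distrib]
    have hA : ∑ j ∈ Finset.range (2*i+1),
        (-1:K)^j • (X (((2*i - j:ℕ)) : Fin (n+1)) * Dw K n (X ((j:ℕ) : Fin (n+1))))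
        = ∑ j ∈ Finset.range (2*i),
          (-1:K)^(j+1) • (X (((2*i - (j+1) :ℕ)) : Fin (n+1)) * X (((j:ℕ)) : Fin (n+1))) := by
      rw [Finset.sum_range_succ']
      rw [DwXc K n 0 (by omega), if_pos rfl, mul_zero, smul_zero, add_zero]
      refine Finset.sum_congr rfl fun j hj => ?_
      rw [DwXc K n (j+1) (by simp at hj; omega), if_neg (by omega)]
      congr 3 <;> omega
    have hB : ∑ j ∈ Finset.range (2*i+1),
        (-1:K)^j • (X ((j:ℕ) : Fin (n+1)) * Dw K n (X (((2*i - j:ℕ)) : Fin (n+1))))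
        = ∑ j ∈ Finset.range (2*i),
          (-1:K)^j • (X ((j:ℕ) : Fin (n+1)) * X (((2*i - (j+1) :ℕ)) : Fin (n+1))) := by
      rw [Finset.sum_range_succ]
      rw [show 2*i - 2*i = 0 by omega, DwXc K n 0 (by omega), if_pos rfl, mul_zero,
        smul_zero, add_zero]
      refine Finset.sum_congr rfl fun j hj => ?_
      rw [DwXc K n (2*i - j) (by omega), if_neg (by simp at hj; omega)]
      congr 3 <;> omega
    rw [hA, hB, ← Finset.sum_add_distrib]
    apply Finset.sum_eq_zero
    intro j hj
    rw [pow_succ, mul_comm ((-1:K)^j) (-1:K), ← smul_smul]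
    rw [mul_comm (X (((2*i - (j+1) :ℕ)) : Fin (n+1))) (X ((j:ℕ) : Fin (n+1)))]
    rw [neg_one_smul]
    exact neg_add_cancel _
  have hconst : constantCoeff s2i = 0 := by
    rw [hs2i, map_sum]
    apply Finset.sum_eq_zero
    intro j hj
    simp [smul_eq_C_mul]
  have hsmem : s2i ∈ HI K n := by
    rw [HI]
    exact Ideal.subset_span ⟨hDs, hconst⟩
  have hrad : s2i ∈ (HI K n).radical := Ideal.le_radical hsmem
  have hsum_split : s2i = (-1:K)^i • (X ((i:ℕ) : Fin (n+1)) * X (((2*i - i :ℕ)) : Fin (n+1)))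
      + ∑ j ∈ (Finset.range (2*i+1)).erase i,
        ((-1 : K)^j) • (X ((j : ℕ) : Fin (n+1)) * X (((2*i - j : ℕ)) : Fin (n+1))) := by
    rw [hs2i]
    exact (Finset.add_sum_erase _ _ (Finset.mem_range.2 (by omega))).symm
  have hrest : ∑ j ∈ (Finset.range (2*i+1)).erase i,
      ((-1 : K)^j) • (X ((j : ℕ) : Fin (n+1)) * X (((2*i - j : ℕ)) : Fin (n+1)))
      ∈ (HI K n).radical := by
    apply Ideal.sum_mem
    intro j hj
    have hji : j ≠ i := (Finset.mem_erase.1 hj).1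
    have hjr : j < 2*i+1 := Finset.mem_range.1 (Finset.mem_erase.1 hj).2
    rw [smul_eq_C_mul]
    by_cases hlt : j < i
    · rw [mul_comm (X ((j:ℕ) : Fin (n+1))) (X (((2*i - j:ℕ)) : Fin (n+1))), ← mul_assoc]
      exact Ideal.mul_mem_left _ _ (ih j hlt (by omega))
    · have hlt2 : 2*i - j < i := by omega
      rw [← mul_assoc]
      exact Ideal.mul_mem_left _ _ (ih (2*i - j) hlt2 (by omega))
  have hx2 : (X ((i:ℕ) : Fin (n+1)) : MvPolynomial (Fin (n+1)) K)^2 ∈ (HI K n).radical := by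
    have heq : (X ((i:ℕ) : Fin (n+1)) : MvPolynomial (Fin (n+1)) K)^2
        = (-1:K)^i • (s2i - ∑ j ∈ (Finset.range (2*i+1)).erase i,
          ((-1 : K)^j) • (X ((j : ℕ) : Fin (n+1)) * X (((2*i - j : ℕ)) : Fin (n+1)))) := by
      rw [hsum_split]
      rw [show 2*i - i = i by omega]
      rw [add_sub_cancel_right, smul_smul, ← pow_add]
      rw [show (-1:K)^(i+i) = 1 from Even.neg_one_pow ⟨i, rfl⟩, one_smul, sq]
    rw [heq, smul_eq_C_mul]
    exact Ideal.mul_mem_left _ _ (Ideal.sub_mem _ hrad hrest)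
  rcases hx2 with ⟨k, hk⟩
  exact ⟨2*k, by rwa [pow_mul]⟩

end Hilb

theorem stmt5 (K : Type) [Field K] [CharZero K] (n : ℕ) :
    (Ideal.span {f : MvPolynomial (Fin (n + 1)) K |
        Dw K n f = 0 ∧ MvPolynomial.constantCoeff f = 0}).radical
      = Ideal.span ((fun i : ℕ => (X ((i : ℕ) : Fin (n + 1)) :
          MvPolynomial (Fin (n + 1)) K)) '' {i : ℕ | i ≤ n / 2}) := by
  have hset : ((fun i : ℕ => (X ((i : ℕ) : Fin (n + 1)) : MvPolynomial (Fin (n + 1)) K))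
      '' {i : ℕ | i ≤ n / 2}) = X '' {j : Fin (n+1) | (j : ℕ) ≤ n / 2} := by
    ext p
    constructor
    · rintro ⟨i, hi, rfl⟩
      simp only [Set.mem_setOf_eq] at hi
      refine ⟨(i : Fin (n+1)), ?_, rfl⟩
      simp only [Set.mem_setOf_eq]
      rw [Fin.val_cast_of_lt (by omega : i < n + 1)]
      exact hi
    · rintro ⟨j, hj, rfl⟩
      exact ⟨(j : ℕ), hj, by simp [Fin.cast_val_eq_self]⟩
  rw [hset]
  have h1 : (Hilb.HI K n).radical = (Ideal.span {f : MvPolynomial (Fin (n + 1)) K |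
      Dw K n f = 0 ∧ MvPolynomial.constantCoeff f = 0}).radical := rfl
  apply le_antisymm
  · rw [← h1]
    calc (Hilb.HI K n).radical ≤ (Hilb.JI K n).radical :=
          Ideal.radical_mono (Hilb.HI_le_JI K n)
      _ = Hilb.JI K n := (Hilb.JI_prime K n).radical
  · rw [Ideal.span_le]
    rintro _ ⟨j, hj, rfl⟩
    have := Hilb.Xmem K n (j : ℕ) hj
    rw [Fin.cast_val_eq_self] at this
    exact this
end
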